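/- arXiv:2402.02025 — 3 statements merged into one kernel-verified Lean document; each statement's English description precedes it below -/
import Mathlib

section
/- Let H be a positive integer, γ ∈ (0,1], ξ ∈ ℝ, and c : ℕ → ℝ with c(h) ≥ 0 for all h. Define η(0) = ξ and η(h+1) = γ⁻¹ · (η(h) − c(h)). Then ∑_{h=0}^{H} γ^h c(h) ≤ ξ if and only if c(h) ≤ η(h) for all h ∈ {0,...,H}. -/
theorem cumulative_iff_instantaneous (H : ℕ) (hH : 0 < H) (γ ξ : ℝ) (hγ0 : 0 < γ) (hγ1 : γ ≤ 1)
    (c : ℕ → ℝ) (hc : ∀ h, 0 ≤ c h)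
    (η : ℕ → ℝ) (hη0 : η 0 = ξ)
    (hηrec : ∀ h, η (h + 1) = γ⁻¹ * (η h - c h)) :
    (∑ h ∈ Finset.range (H + 1), γ ^ h * c h ≤ ξ) ↔ ∀ h ≤ H, c h ≤ η h := by
  have hγne : γ ≠ 0 := ne_of_gt hγ0
  have closed : ∀ h, γ ^ h * η h = ξ - ∑ i ∈ Finset.range h, γ ^ i * c i := by
    intro h
    induction h with
    | zero => simp [hη0]
    | succ n ih =>
      have key : γ ^ (n + 1) * (γ⁻¹ * (η n - c n)) = γ ^ n * (η n - c n) := by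
        field_simp
        ring
      rw [hηrec n, key, Finset.sum_range_succ, mul_sub, ih]
      ring
  constructor
  · intro hsum h hh
    have h1 : γ ^ h * c h ≤ γ ^ h * η h := by
      rw [closed h]
      have : ∑ i ∈ Finset.range h, γ ^ i * c i + γ ^ h * c h
          ≤ ∑ i ∈ Finset.range (H + 1), γ ^ i * c i := by
        rw [← Finset.sum_range_succ]
        apply Finset.sum_le_sum_of_subset_of_nonneg
        · exact Finset.range_subset_range.2 (by omega)
        · intro i _ _
          exact mul_nonneg (pow_nonneg hγ0.le i) (hc i)
      linarith
    exact le_of_mul_le_mul_left (by linarith [h1]) (pow_pos hγ0 h)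
  · intro hall
    have h1 : γ ^ H * c H ≤ γ ^ H * η H :=
      mul_le_mul_of_nonneg_left (hall H le_rfl) (pow_nonneg hγ0.le H)
    rw [closed H] at h1
    rw [Finset.sum_range_succ]
    linarith
end

section
/- Let Ω be a probability space, H a positive integer, and X_0, ..., X_H real-valued random variables with X_h ∈ [0,1] almost surely. Let γ ∈ (0,1], ξ ∈ ℝ, and define η(0) = ξ, η(h+1) = γ⁻¹·(η(h) − X_h) (a random sequence). Then P(∑_{h=0}^{H} γ^h X_h ≤ ξ) = 1 if and only if P(X_h ≤ η(h)) = 1 for all h ∈ {0,...,H}. -/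
open MeasureTheory

theorem as_cumulative_iff_as_instantaneous {Ω : Type*} [MeasurableSpace Ω] (μ : Measure Ω)
    [IsProbabilityMeasure μ] (H : ℕ) (hH : 0 < H)
    (X : ℕ → Ω → ℝ) (hXmeas : ∀ h, Measurable (X h))
    (hX : ∀ h, ∀ᵐ ω ∂μ, 0 ≤ X h ω ∧ X h ω ≤ 1)
    (γ ξ : ℝ) (hγ0 : 0 < γ) (hγ1 : γ ≤ 1)
    (η : ℕ → Ω → ℝ) (hη0 : ∀ ω, η 0 ω = ξ)
    (hηrec : ∀ h ω, η (h + 1) ω = γ⁻¹ * (η h ω - X h ω)) :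
    μ {ω | ∑ h ∈ Finset.range (H + 1), γ ^ h * X h ω ≤ ξ} = 1 ↔
      ∀ h ≤ H, μ {ω | X h ω ≤ η h ω} = 1 := by
  have hγne : γ ≠ 0 := ne_of_gt hγ0
  -- key identity: γ^h * η h ω = ξ - ∑_{k<h} γ^k X_k ω
  have hkey : ∀ h ω, γ ^ h * η h ω = ξ - ∑ k ∈ Finset.range h, γ ^ k * X k ω := by
    intro h
    induction h with
    | zero => intro ω; simp [hη0]
    | succ n ih =>
      intro ω
      rw [hηrec, Finset.sum_range_succ, pow_succ]
      have : γ ^ n * γ * (γ⁻¹ * (η n ω - X n ω)) = γ ^ n * (η n ω - X n ω) := by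
        field_simp
      rw [this, mul_sub, ih ω]
      ring
  -- pointwise equivalence for a fixed h
  have hpt : ∀ h ω, (X h ω ≤ η h ω ↔
      ∑ k ∈ Finset.range (h + 1), γ ^ k * X k ω ≤ ξ) := by
    intro h ω
    have hpow : (0:ℝ) < γ ^ h := pow_pos hγ0 h
    rw [Finset.sum_range_succ]
    constructor
    · intro hle
      have := mul_le_mul_of_nonneg_left hle (le_of_lt hpow)
      rw [hkey] at this
      linarith
    · intro hle
      have h2 : γ ^ h * X h ω ≤ γ ^ h * η h ω := by
        rw [hkey]; linarith
      exact le_of_mul_le_mul_left h2 hpow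
  -- measurability of η
  have hηmeas : ∀ h, Measurable (η h) := by
    intro h
    induction h with
    | zero =>
      have : η 0 = fun _ => ξ := funext hη0
      rw [this]; exact measurable_const
    | succ n ih =>
      have : η (n + 1) = fun ω => γ⁻¹ * (η n ω - X n ω) := funext (hηrec n)
      rw [this]
      exact (ih.sub (hXmeas n)).const_mul _
  have hXnn : ∀ᵐ ω ∂μ, ∀ k, 0 ≤ X k ω := by
    rw [ae_all_iff]
    intro k
    filter_upwards [hX k] with ω hω using hω.1
  have hcumMeas : MeasurableSet {ω | ∑ h ∈ Finset.range (H + 1), γ ^ h * X h ω ≤ ξ} := by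
    apply measurableSet_le
    · exact Finset.measurable_sum _ (fun i _ => (hXmeas i).const_mul _)
    · exact measurable_const
  have hinstMeas : ∀ h, MeasurableSet {ω | X h ω ≤ η h ω} :=
    fun h => measurableSet_le (hXmeas h) (hηmeas h)
  rw [← prob_compl_eq_zero_iff hcumMeas]
  have hcum_ae : μ {ω | ∑ h ∈ Finset.range (H + 1), γ ^ h * X h ω ≤ ξ}ᶜ = 0 ↔
      ∀ᵐ ω ∂μ, ∑ h ∈ Finset.range (H + 1), γ ^ h * X h ω ≤ ξ := by
    rw [ae_iff]; rfl
  rw [hcum_ae]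
  constructor
  · intro hcum h hhH
    rw [← prob_compl_eq_zero_iff (hinstMeas h)]
    have : μ {ω | X h ω ≤ η h ω}ᶜ = 0 ↔ ∀ᵐ ω ∂μ, X h ω ≤ η h ω := by
      rw [ae_iff]; rfl
    rw [this]
    filter_upwards [hcum, hXnn] with ω hω hnn
    rw [hpt]
    calc ∑ k ∈ Finset.range (h + 1), γ ^ k * X k ω
        ≤ ∑ k ∈ Finset.range (H + 1), γ ^ k * X k ω := by
          apply Finset.sum_le_sum_of_subset_of_nonneg
          · exact Finset.range_subset_range.2 (by omega)
          · intro i _ _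
            exact mul_nonneg (le_of_lt (pow_pos hγ0 i)) (hnn i)
      _ ≤ ξ := hω
  · intro hinst
    have hH' : μ {ω | X H ω ≤ η H ω} = 1 := hinst H le_rfl
    rw [← prob_compl_eq_zero_iff (hinstMeas H)] at hH'
    have hH'' : ∀ᵐ ω ∂μ, X H ω ≤ η H ω := by
      rw [ae_iff]; exact hH'
    filter_upwards [hH''] with ω hω
    exact (hpt H ω).1 hω
end

section
/- Let Ω be a probability space, H a positive integer, γ ∈ (0,1], ξ ∈ ℝ, and X_0,...,X_H integrable random variables with X_h ≥ 0 a.s. Define the random sequence η(0) = ξ, η(h+1) = γ⁻¹·(η(h) − X_h). If ∑_{h=0}^{H} γ^h E[X_h] ≤ ξ fails, then there exists h ∈ {0,...,H} such that E[X_h] > E[η(h)], and conversely if ∑_{h=0}^{H} γ^h E[X_h] ≤ ξ then E[X_h] ≤ E[η(h)] for all h ∈ {0,...,H}. -/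
open MeasureTheory

theorem expected_cumulative_iff_expected_instantaneous {Ω : Type*} [MeasurableSpace Ω]
    (μ : Measure Ω) [IsProbabilityMeasure μ] (H : ℕ) (hH : 0 < H)
    (γ ξ : ℝ) (hγ0 : 0 < γ) (hγ1 : γ ≤ 1)
    (X : ℕ → Ω → ℝ) (hXint : ∀ h, Integrable (X h) μ)
    (hX : ∀ h, ∀ᵐ ω ∂μ, 0 ≤ X h ω)
    (η : ℕ → Ω → ℝ) (hη0 : ∀ ω, η 0 ω = ξ)
    (hηrec : ∀ h ω, η (h + 1) ω = γ⁻¹ * (η h ω - X h ω)) :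
    (¬ (∑ h ∈ Finset.range (H + 1), γ ^ h * ∫ ω, X h ω ∂μ) ≤ ξ →
        ∃ h ≤ H, (∫ ω, X h ω ∂μ) > ∫ ω, η h ω ∂μ) ∧
    ((∑ h ∈ Finset.range (H + 1), γ ^ h * ∫ ω, X h ω ∂μ) ≤ ξ →
        ∀ h ≤ H, (∫ ω, X h ω ∂μ) ≤ ∫ ω, η h ω ∂μ) := by
  have hγne : γ ≠ 0 := ne_of_gt hγ0
  set S : ℕ → ℝ := fun h => ∑ i ∈ Finset.range h, γ ^ i * ∫ ω, X i ω ∂μ with hS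
  -- integral of η
  have key : ∀ h, Integrable (η h) μ ∧ (∫ ω, η h ω ∂μ) = γ⁻¹ ^ h * (ξ - S h) := by
    intro h
    induction h with
    | zero =>
      constructor
      · have : η 0 = fun _ => ξ := funext hη0
        rw [this]; exact integrable_const ξ
      · simp [hS, hη0]
    | succ n ih =>
      obtain ⟨hint, hval⟩ := ih
      have heq : η (n + 1) = fun ω => γ⁻¹ * (η n ω - X n ω) := funext (hηrec n)
      have hint' : Integrable (η (n + 1)) μ := by
        rw [heq]; exact ((hint.sub (hXint n)).const_mul γ⁻¹)
      refine ⟨hint', ?_⟩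
      rw [heq]
      rw [integral_const_mul, integral_sub hint (hXint n), hval]
      have hSsucc : S (n + 1) = S n + γ ^ n * ∫ ω, X n ω ∂μ := by
        simp [hS, Finset.sum_range_succ]
      rw [hSsucc]
      field_simp
      have h1 : γ * γ⁻¹ = 1 := mul_inv_cancel₀ hγne
      have h2 : γ ^ n * γ⁻¹ ^ n = 1 := by rw [← mul_pow, h1, one_pow]
      linear_combination (∫ (a : Ω), X n a ∂μ) * (γ * γ⁻¹) * h2 + (∫ (a : Ω), X n a ∂μ) * h1 - (γ⁻¹ ^ n * ξ - γ⁻¹ ^ n * S n) * h1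
  -- the per-step equivalence
  have equiv : ∀ h, ((∫ ω, X h ω ∂μ) ≤ ∫ ω, η h ω ∂μ) ↔ S (h + 1) ≤ ξ := by
    intro h
    rw [(key h).2]
    have hpow : (0:ℝ) < γ ^ h := pow_pos hγ0 h
    have hSsucc : S (h + 1) = S h + γ ^ h * ∫ ω, X h ω ∂μ := by
      simp [hS, Finset.sum_range_succ]
    rw [hSsucc]
    rw [inv_pow, ← div_eq_inv_mul, le_div_iff₀ hpow]
    constructor <;> intro hle <;> nlinarith
  have hXnonneg : ∀ i, 0 ≤ ∫ ω, X i ω ∂μ := fun i => integral_nonneg_of_ae (hX i)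
  constructor
  · intro hnot
    by_contra hcon
    push_neg at hcon
    exact hnot ((equiv H).mp (hcon H le_rfl))
  · intro hle h hhH
    rw [equiv h]
    refine le_trans ?_ hle
    apply Finset.sum_le_sum_of_subset_of_nonneg
    · exact Finset.range_subset_range.mpr (by omega)
    · intro i _ _
      exact mul_nonneg (le_of_lt (pow_pos hγ0 i)) (hXnonneg i)
end
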